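/- For the symmetric composition Φ_h = R_{h/2} ∘ K_h ∘ R_{h/2} applied to a point x₀ ∈ ℝ² (with K the kick map of a C³ potential V and R the rotation flow), the Hamiltonian H(q,p) = (q²+p²)/2 + V(q) satisfies H(Φ_h(x₀)) = H(x₀) + O(h³) as h → 0; i.e., there exist constants C, h₀ > 0 (depending on x₀ and V) such that |H(Φ_h(x₀)) - H(x₀)| ≤ C h³ for all 0 < h ≤ h₀. -/

import Mathlib

noncomputable def Rot (ψ : ℝ) (x : ℝ × ℝ) : ℝ × ℝ :=
  (x.1 * Real.cos ψ + x.2 * Real.sin ψ, -x.1 * Real.sin ψ + x.2 * Real.cos ψ)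

noncomputable def Kick (V : ℝ → ℝ) (ψ : ℝ) (x : ℝ × ℝ) : ℝ × ℝ :=
  (x.1, x.2 - ψ * deriv V x.1)

noncomputable def Ham (V : ℝ → ℝ) (x : ℝ × ℝ) : ℝ :=
  (x.1 ^ 2 + x.2 ^ 2) / 2 + V x.1

lemma abs_sub_le_of_mem_uIcc {x y z : ℝ} (hz : z ∈ Set.uIcc x y) : |z - x| ≤ |y - x| := by
  rw [Set.mem_uIcc] at hz
  rcases hz with ⟨h1, h2⟩ | ⟨h1, h2⟩
  · rw [abs_of_nonneg (by linarith), abs_of_nonneg (by linarith)]; linarith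
  · rw [abs_of_nonpos (by linarith), abs_of_nonpos (by linarith)]; linarith

lemma mvtA {φ φ' : ℝ → ℝ} {x y M : ℝ}
    (hφ : ∀ z, HasDerivAt φ (φ' z) z)
    (hM : ∀ z ∈ Set.uIcc x y, |φ' z| ≤ M) :
    |φ y - φ x| ≤ M * |y - x| := by
  have := Convex.norm_image_sub_le_of_norm_hasDerivWithin_le
    (f := φ) (f' := φ') (s := Set.uIcc x y)
    (fun z _ => (hφ z).hasDerivWithinAt) (fun z hz => hM z hz)
    (convex_uIcc x y) Set.left_mem_uIcc Set.right_mem_uIcc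
  simpa [Real.norm_eq_abs] using this

lemma mvtB {φ φ' : ℝ → ℝ} {x y K : ℝ}
    (hφ : ∀ z, HasDerivAt φ (φ' z) z)
    (hK : ∀ z ∈ Set.uIcc x y, |φ' z - φ' x| ≤ K) :
    |φ y - φ x - φ' x * (y - x)| ≤ K * |y - x| := by
  have h2 : ∀ z, HasDerivAt (fun w => φ w - φ' x * w) (φ' z - φ' x) z := by
    intro z
    have := (hφ z).sub ((hasDerivAt_id z).const_mul (φ' x))
    exact (by simpa using this : HasDerivAt (φ - fun y => φ' x * y) (φ' z - φ' x) z)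
  have := mvtA h2 hK
  rw [show φ y - φ x - φ' x * (y - x) = (φ y - φ' x * y) - (φ x - φ' x * x) by ring]
  exact this

lemma abs_add9 (t1 t2 t3 t4 t5 t6 t7 t8 t9 : ℝ) :
    |t1+t2+t3+t4+t5+t6+t7+t8+t9| ≤ |t1|+|t2|+|t3|+|t4|+|t5|+|t6|+|t7|+|t8|+|t9| := by
  calc |t1+t2+t3+t4+t5+t6+t7+t8+t9| ≤ |t1+t2+t3+t4+t5+t6+t7+t8| + |t9| := abs_add_le _ _
    _ ≤ (|t1+t2+t3+t4+t5+t6+t7| + |t8|) + |t9| := by linarith [abs_add_le (t1+t2+t3+t4+t5+t6+t7) t8]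
    _ ≤ ((|t1+t2+t3+t4+t5+t6| + |t7|) + |t8|) + |t9| := by linarith [abs_add_le (t1+t2+t3+t4+t5+t6) t7]
    _ ≤ (((|t1+t2+t3+t4+t5| + |t6|) + |t7|) + |t8|) + |t9| := by linarith [abs_add_le (t1+t2+t3+t4+t5) t6]
    _ ≤ ((((|t1+t2+t3+t4| + |t5|) + |t6|) + |t7|) + |t8|) + |t9| := by linarith [abs_add_le (t1+t2+t3+t4) t5]
    _ ≤ (((((|t1+t2+t3| + |t4|) + |t5|) + |t6|) + |t7|) + |t8|) + |t9| := by linarith [abs_add_le (t1+t2+t3) t4]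
    _ ≤ ((((((|t1+t2| + |t3|) + |t4|) + |t5|) + |t6|) + |t7|) + |t8|) + |t9| := by linarith [abs_add_le (t1+t2) t3]
    _ ≤ |t1|+|t2|+|t3|+|t4|+|t5|+|t6|+|t7|+|t8|+|t9| := by linarith [abs_add_le t1 t2]

set_option maxHeartbeats 1000000 in
/-- The symmetric (Ruth/Strang) composition Φ_h = R_{h/2} ∘ K_h ∘ R_{h/2}
preserves the Hamiltonian up to O(h³). -/
theorem stmt_10 (V : ℝ → ℝ) (hV : ContDiff ℝ 3 V) (x₀ : ℝ × ℝ) :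
    ∃ C h₀ : ℝ, 0 < C ∧ 0 < h₀ ∧ ∀ h : ℝ, 0 < h → h ≤ h₀ →
      |Ham V (Rot (h / 2) (Kick V h (Rot (h / 2) x₀))) - Ham V x₀| ≤ C * h ^ 3 := by
  -- regularity of V
  have hV3 : ContDiff ℝ ((2 : WithTop ℕ∞) + 1) V := by
    have : ((2 : WithTop ℕ∞) + 1) = 3 := by norm_num
    rw [this]; exact hV
  rw [contDiff_succ_iff_deriv] at hV3
  have hVdiff : Differentiable ℝ V := hV3.1
  have hW2 : ContDiff ℝ ((1 : WithTop ℕ∞) + 1) (deriv V) := by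
    have : ((1 : WithTop ℕ∞) + 1) = 2 := by norm_num
    rw [this]; exact hV3.2.2
  rw [contDiff_succ_iff_deriv] at hW2
  have hWdiff : Differentiable ℝ (deriv V) := hW2.1
  have hW'1 : ContDiff ℝ 1 (deriv (deriv V)) := hW2.2.2
  rw [contDiff_one_iff_deriv] at hW'1
  have hW'diff : Differentiable ℝ (deriv (deriv V)) := hW'1.1
  have hW''cont : Continuous (deriv (deriv (deriv V))) := hW'1.2
  set N := |x₀.1| + |x₀.2| with hN
  have hN0 : 0 ≤ N := by rw [hN]; positivity
  set R := N + 1 with hR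
  -- uniform bound on the derivatives of V on [-R, R]
  obtain ⟨M₀, hM₀⟩ := (isCompact_Icc (a := -R) (b := R)).exists_bound_of_continuousOn
    (f := fun y => |deriv V y| + |deriv (deriv V) y| + |deriv (deriv (deriv V)) y|)
    (((hWdiff.continuous.abs.add hW'diff.continuous.abs).add hW''cont.abs).continuousOn)
  set M := max M₀ 1 with hM
  have hM1 : (1:ℝ) ≤ M := le_max_right _ _
  have hMpos : (0:ℝ) < M := lt_of_lt_of_le one_pos hM1
  have hball : ∀ y : ℝ, |y| ≤ R →
      |deriv V y| ≤ M ∧ |deriv (deriv V) y| ≤ M ∧ |deriv (deriv (deriv V)) y| ≤ M := by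
    intro y hy
    have h1 := hM₀ y (Set.mem_Icc.mpr (abs_le.mp hy))
    rw [Real.norm_eq_abs] at h1
    have h2 : |deriv V y| + |deriv (deriv V) y| + |deriv (deriv (deriv V)) y| ≤ M₀ :=
      le_trans (le_abs_self _) h1
    have hle : M₀ ≤ M := le_max_left _ _
    refine ⟨?_, ?_, ?_⟩ <;>
      [skip; skip; skip] <;>
      nlinarith [abs_nonneg (deriv V y), abs_nonneg (deriv (deriv V) y),
        abs_nonneg (deriv (deriv (deriv V)) y)]
  have habsJ : ∀ {x y z : ℝ}, |x| ≤ R → |y| ≤ R → z ∈ Set.uIcc x y → |z| ≤ R := by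
    intro x y z hx hy hz
    rw [Set.mem_uIcc] at hz
    rw [abs_le] at hx hy ⊢
    rcases hz with ⟨h1, h2⟩ | ⟨h1, h2⟩ <;> constructor <;> linarith [hx.1, hx.2, hy.1, hy.2]
  set C := M*N/16 + M*N^2 + M^2/32 + M^3/4 + M^2*N/2 + M*N^3 + M*N^3 + M^2*N + M^2*N/2 + 1
    with hC
  have hCpos : 0 < C := by
    have t1 : 0 ≤ M*N := mul_nonneg hMpos.le hN0
    have t2 : 0 ≤ M*N^2 := mul_nonneg hMpos.le (sq_nonneg N)
    have t3 : 0 ≤ M^2 := sq_nonneg M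
    have t4 : 0 ≤ M^3 := pow_nonneg hMpos.le 3
    have t5 : 0 ≤ M^2*N := mul_nonneg t3 hN0
    have t6 : 0 ≤ M*N^3 := mul_nonneg hMpos.le (pow_nonneg hN0 3)
    rw [hC]; clear_value M N; linarith only [t1, t2, t3, t4, t5, t6]
  refine ⟨C, 1/M, hCpos, one_div_pos.mpr hMpos, ?_⟩
  intro h hp hle
  have hMh : h * M ≤ 1 := by
    have h1 : h * M ≤ (1/M) * M := mul_le_mul_of_nonneg_right hle hMpos.le
    have h2 : (1/M) * M = 1 := by field_simp
    linarith
  have hh1 : h ≤ 1 := by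
    have := mul_le_mul_of_nonneg_left hM1 hp.le
    nlinarith [this]
  have h3nn : (0:ℝ) ≤ h^3 := by positivity
  have h43 : h^4 ≤ h^3 := by nlinarith [mul_nonneg (pow_nonneg hp.le 3) (by linarith : (0:ℝ) ≤ 1 - h)]
  simp only [Ham, Rot, Kick]
  set a := x₀.1 with ha
  set b := x₀.2 with hb
  set W := deriv V with hW
  set c := Real.cos (h/2) with hc
  set s := Real.sin (h/2) with hs
  set q1 := a * c + b * s with hq1
  set p1 := -a * s + b * c with hp1
  have pyth : s^2 + c^2 = 1 := Real.sin_sq_add_cos_sq _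
  have hcos2 : Real.cos h = 2*c^2 - 1 := by
    have e := Real.cos_two_mul (h/2)
    rw [show 2*(h/2) = h by ring] at e
    rw [e, hc]
  have hsin2 : Real.sin h = 2*s*c := by
    have e := Real.sin_two_mul (h/2)
    rw [show 2*(h/2) = h by ring] at e
    rw [e, hs, hc]
  set m := a * Real.cos h + b * Real.sin h with hm
  set q2 := m - h*s*W q1 with hq2v
  have hQ : q1 * c + (p1 - h * W q1) * s = q2 := by
    rw [hq2v, hm, hcos2, hsin2, hq1, hp1]; linear_combination (-a) * pyth
  have hVQ : V (q1 * c + (p1 - h * W q1) * s) = V q2 := by rw [hQ]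
  rw [hVQ]
  have key : ((q1*c + (p1 - h*W q1)*s)^2 + (-q1*s + (p1 - h*W q1)*c)^2)/2 + V q2 -
      ((a^2+b^2)/2 + V a) = -(h*p1)*W q1 + h^2/2*(W q1)^2 + (V q2 - V a) := by
    have e1 : (q1*c + (p1 - h*W q1)*s)^2 + (-q1*s + (p1 - h*W q1)*c)^2
        = q1^2 + (p1 - h*W q1)^2 := by
      linear_combination (q1^2 + (p1 - h*W q1)^2) * pyth
    have e2 : q1^2 + p1^2 = a^2 + b^2 := by
      rw [hq1, hp1]; linear_combination (a^2 + b^2) * pyth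
    linear_combination e1/2 + e2/2
  rw [key]
  set c2 := W a with hc2v
  set c3 := deriv W a with hc3v
  -- trigonometric bounds
  have hs0 : 0 ≤ s := by
    rw [hs]; exact Real.sin_nonneg_of_nonneg_of_le_pi (by linarith) (by linarith [Real.pi_gt_three])
  have hs_le : s ≤ h/2 := by rw [hs]; exact le_of_lt (Real.sin_lt (by linarith))
  have hs_lb : h/2 - (h/2)^3/4 < s := by
    rw [hs]; have := Real.sin_gt_sub_cube (x := h/2) (by linarith); linarith [pow_pos (half_pos hp) 3]
  have hc_le1 : c ≤ 1 := by rw [hc]; exact Real.cos_le_one _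
  have hc_lb : 1 - c ≤ h^2/8 := by
    have e := Real.cos_two_mul (h/4)
    rw [show 2*(h/4) = h/2 by ring] at e
    have p4 := Real.sin_sq_add_cos_sq (h/4)
    have s4a : Real.sin (h/4) ≤ h/4 := le_of_lt (Real.sin_lt (by linarith))
    have s4b : 0 ≤ Real.sin (h/4) :=
      Real.sin_nonneg_of_nonneg_of_le_pi (by linarith) (by linarith [Real.pi_gt_three])
    rw [hc, e]
    have e2 : 1 - (2*Real.cos (h/4)^2 - 1) = 2*Real.sin (h/4)^2 := by
      linear_combination (-2) * p4
    rw [e2]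
    have w : Real.sin (h/4) * Real.sin (h/4) ≤ (h/4) * (h/4) :=
      mul_le_mul s4a s4a s4b (by linarith)
    linarith [w]
  have hc0 : 0 ≤ c := by
    linarith [hc_lb, mul_le_mul hh1 hh1 hp.le zero_le_one]
  -- size bounds for points
  have haN : |a| ≤ N := by rw [hN]; linarith [abs_nonneg b]
  have hbN : |b| ≤ N := by rw [hN]; linarith [abs_nonneg a]
  have haR : |a| ≤ R := by rw [hR]; linarith
  have hp1N : |p1| ≤ N := by
    rw [hp1]
    have t := abs_add_le (-a*s) (b*c)
    rw [abs_mul, abs_mul, abs_neg, abs_of_nonneg hs0, abs_of_nonneg hc0] at t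
    have e : -a * s + b * c = (-a*s) + (b*c) := by ring
    rw [e, hN]
    linarith [t, mul_le_mul_of_nonneg_left (show s ≤ 1 by linarith) (abs_nonneg a),
      mul_le_mul_of_nonneg_left hc_le1 (abs_nonneg b)]
  have hq1N : |q1| ≤ N := by
    rw [hq1]
    have t := abs_add_le (a*c) (b*s)
    rw [abs_mul, abs_mul, abs_of_nonneg hs0, abs_of_nonneg hc0] at t
    rw [hN]
    linarith [t, mul_le_mul_of_nonneg_left (show s ≤ 1 by linarith) (abs_nonneg b),
      mul_le_mul_of_nonneg_left hc_le1 (abs_nonneg a)]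
  have hq1R : |q1| ≤ R := by rw [hR]; linarith
  have hmN : |m| ≤ N := by
    rw [hm]
    have t := abs_add_le (a * Real.cos h) (b * Real.sin h)
    rw [abs_mul, abs_mul] at t
    rw [hN]
    linarith [t, mul_le_mul_of_nonneg_left (Real.abs_cos_le_one h) (abs_nonneg a),
      mul_le_mul_of_nonneg_left (Real.abs_sin_le_one h) (abs_nonneg b)]
  have hmR : |m| ≤ R := by rw [hR]; linarith
  have hD2 : m - a = 2*s*p1 := by
    rw [hm, hcos2, hsin2, hp1]; linear_combination (2*a) * pyth
  have hD1b : |q1 - a| ≤ N*h := by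
    have e : q1 - a = a*(c-1) + b*s := by rw [hq1]; ring
    rw [e]
    have t := abs_add_le (a*(c-1)) (b*s)
    rw [abs_mul, abs_mul, abs_of_nonpos (by linarith : c - 1 ≤ 0), abs_of_nonneg hs0] at t
    have u1 : |a| *(-(c-1)) ≤ |a| *(h^2/8) := mul_le_mul_of_nonneg_left (by linarith) (abs_nonneg a)
    have u2 : |b| *s ≤ |b| *(h/2) := mul_le_mul_of_nonneg_left hs_le (abs_nonneg b)
    have u3 : |a| *(h^2/8) ≤ |a| *h := mul_le_mul_of_nonneg_left
      (by linarith [mul_le_mul_of_nonneg_left hh1 hp.le]) (abs_nonneg a)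
    have u4 : |b| *(h/2) ≤ |b| *h := mul_le_mul_of_nonneg_left (by linarith) (abs_nonneg b)
    rw [hN]
    linarith [t, u1, u2, u3, u4]
  have hD2b : |m - a| ≤ N*h := by
    rw [hD2, abs_mul, abs_mul]
    have : |(2:ℝ)| = 2 := by norm_num
    rw [this, abs_of_nonneg hs0]
    linarith [mul_le_mul (show 2*s ≤ h by linarith) hp1N (abs_nonneg p1) hp.le]
  have hWq1b : |W q1| ≤ M := (hball q1 hq1R).1
  have hc2b : |c2| ≤ M := (hball a haR).1
  have hc3b : |c3| ≤ M := (hball a haR).2.1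
  have hδ : |q2 - m| ≤ M*h^2/2 := by
    have e : q2 - m = -(h*s*W q1) := by rw [hq2v]; ring
    rw [e, abs_neg, abs_mul, abs_mul, abs_of_pos hp, abs_of_nonneg hs0]
    have u1 : s * |W q1| ≤ (h/2) * M :=
      mul_le_mul hs_le hWq1b (abs_nonneg _) (by linarith)
    have u2 : h * (s * |W q1|) ≤ h * ((h/2)*M) := mul_le_mul_of_nonneg_left u1 hp.le
    linarith [u2]
  have hq2R : |q2| ≤ R := by
    have t : |q2| ≤ |m| + |q2 - m| := by
      have := abs_add_le m (q2 - m)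
      have e : m + (q2 - m) = q2 := by ring
      rw [e] at this; exact this
    have u : M*h^2/2 ≤ 1 := by
      linarith [mul_le_mul_of_nonneg_right hMh hp.le, hh1]
    rw [hR]; linarith
  -- Lipschitz bounds via the mean value theorem
  have lipW : ∀ x y : ℝ, |x| ≤ R → |y| ≤ R → |W y - W x| ≤ M * |y - x| := by
    intro x y hx hy
    exact mvtA (fun z => (hWdiff z).hasDerivAt)
      (fun z hz => (hball z (habsJ hx hy hz)).2.1)
  have lipW' : ∀ x y : ℝ, |x| ≤ R → |y| ≤ R → |deriv W y - deriv W x| ≤ M * |y - x| := by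
    intro x y hx hy
    exact mvtA (fun z => (hW'diff z).hasDerivAt)
      (fun z hz => (hball z (habsJ hx hy hz)).2.2)
  have hρw : |W q1 - c2 - c3*(q1 - a)| ≤ (M* |q1 - a|)* |q1 - a| := by
    have H := mvtB (x := a) (y := q1) (φ := W) (φ' := deriv W)
      (fun z => (hWdiff z).hasDerivAt)
      (fun z hz => by
        calc |deriv W z - deriv W a| ≤ M* |z - a| := lipW' a z haR (habsJ haR hq1R hz)
          _ ≤ M* |q1 - a| := mul_le_mul_of_nonneg_left (abs_sub_le_of_mem_uIcc hz) hMpos.le)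
    exact H
  have hE1 : |V q2 - V m - W m * (q2 - m)| ≤ (M* |q2 - m|)* |q2 - m| := by
    have H := mvtB (x := m) (y := q2) (φ := V) (φ' := W)
      (fun z => (hVdiff z).hasDerivAt)
      (fun z hz => by
        calc |W z - W m| ≤ M* |z - m| := lipW m z hmR (habsJ hmR hq2R hz)
          _ ≤ M* |q2 - m| := mul_le_mul_of_nonneg_left (abs_sub_le_of_mem_uIcc hz) hMpos.le)
    exact H
  have hρ2 : |V m - V a - c2*(m - a) - c3/2*(m - a)^2| ≤ (M* |m - a|^2)* |m - a| := by
    have hχ : ∀ z, HasDerivAt (fun w => V w - c2*w - c3/2*(w - a)^2)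
        (W z - c2 - c3*(z - a)) z := by
      intro z
      have h1 : HasDerivAt V (W z) z := (hVdiff z).hasDerivAt
      have h2 : HasDerivAt (fun w => c2*w) c2 z := by
        simpa using (hasDerivAt_id z).const_mul c2
      have h3 : HasDerivAt (fun w => c3/2*(w - a)^2) (c3*(z - a)) z := by
        have t1 := ((hasDerivAt_id z).sub_const a).pow 2
        have t2 := t1.const_mul (c3/2)
        refine t2.congr_deriv ?_
        simp only [id_eq]
        ring
      exact (h1.sub h2).sub h3
    have hb2 : ∀ z ∈ Set.uIcc a m, |W z - c2 - c3*(z - a)| ≤ M* |m - a|^2 := by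
      intro z hz
      have hzR : |z| ≤ R := habsJ haR hmR hz
      have H := mvtB (x := a) (y := z) (φ := W) (φ' := deriv W)
        (fun w => (hWdiff w).hasDerivAt)
        (fun w hw => by
          calc |deriv W w - deriv W a| ≤ M* |w - a| :=
                lipW' a w haR (habsJ haR hzR hw)
            _ ≤ M* |z - a| := mul_le_mul_of_nonneg_left (abs_sub_le_of_mem_uIcc hw) hMpos.le)
      have H2 : |W z - c2 - c3*(z - a)| ≤ (M* |z - a|)* |z - a| := H
      have hza : |z - a| ≤ |m - a| := abs_sub_le_of_mem_uIcc hz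
      have w1 : |z - a| * |z - a| ≤ |m - a| * |m - a| :=
        mul_le_mul hza hza (abs_nonneg _) (abs_nonneg _)
      have w2 : M * (|z - a| * |z - a|) ≤ M * (|m - a| * |m - a|) :=
        mul_le_mul_of_nonneg_left w1 hMpos.le
      linarith [H2, w2]
    have H := mvtA (x := a) (y := m) hχ hb2
    have e : (V m - c2*m - c3/2*(m - a)^2) - (V a - c2*a - c3/2*(a - a)^2)
        = V m - V a - c2*(m - a) - c3/2*(m - a)^2 := by ring
    rw [show (M* |m - a|^2)* |m - a| = M* |m - a|^2 * |m - a| by ring]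
    calc |V m - V a - c2*(m - a) - c3/2*(m - a)^2|
        = |(V m - c2*m - c3/2*(m - a)^2) - (V a - c2*a - c3/2*(a - a)^2)| := by rw [e]
      _ ≤ M* |m - a|^2 * |m - a| := H
  -- the master algebraic decomposition
  have master : -(h*p1)*W q1 + h^2/2*(W q1)^2 + (V q2 - V a)
      = c2*((m - a) - h*p1)
      + c3*((m - a)^2/2 - h*p1*(q1 - a))
      + c2^2*(h^2/2 - h*s)
      + (V q2 - V m - W m * (q2 - m))
      + (W m - c2)*(q2 - m)
      + (V m - V a - c2*(m - a) - c3/2*(m - a)^2)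
      + (-(h*p1))*(W q1 - c2 - c3*(q1 - a))
      + h^2/2*((W q1)^2 - c2^2)
      + (-(h*s))*c2*(W q1 - c2) := by
    rw [hq2v]; ring
  rw [master]
  -- bounds for the individual terms
  have h2s : |2*s - h| ≤ h^3/16 := by
    rw [abs_of_nonpos (by linarith : 2*s - h ≤ 0)]
    linarith [hs_lb]
  have lip1 : |W q1 - c2| ≤ M*(N*h) := by
    calc |W q1 - c2| ≤ M* |q1 - a| := lipW a q1 haR hq1R
      _ ≤ M*(N*h) := mul_le_mul_of_nonneg_left hD1b hMpos.le
  have lip2 : |W m - c2| ≤ M*(N*h) := by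
    calc |W m - c2| ≤ M* |m - a| := lipW a m haR hmR
      _ ≤ M*(N*h) := mul_le_mul_of_nonneg_left hD2b hMpos.le
  have b1 : |c2*((m - a) - h*p1)| ≤ M*N/16*h^3 := by
    have e : (m - a) - h*p1 = (2*s - h)*p1 := by rw [hD2]; ring
    calc |c2*((m - a) - h*p1)| = |c2| * (|2*s - h| * |p1|) := by rw [e, abs_mul, abs_mul]
      _ ≤ M * (h^3/16 * N) := by
          apply mul_le_mul hc2b _ (mul_nonneg (abs_nonneg _) (abs_nonneg _)) hMpos.le
          exact mul_le_mul h2s hp1N (abs_nonneg _) (by linarith)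
      _ = M*N/16*h^3 := by ring
  have b2 : |c3*((m - a)^2/2 - h*p1*(q1 - a))| ≤ M*N^2*h^3 := by
    have e : (m - a)^2/2 - h*p1*(q1 - a) = p1*(2*s^2*p1 - h*(q1 - a)) := by rw [hD2]; ring
    have hA2 : |2*s^2*p1 - h*(q1 - a)| ≤ N*h^3 := by
      have e2 : 2*s^2*p1 - h*(q1 - a) = b*(s*(2*s*c - h)) + a*(-(2*s^3) - h*(c - 1)) := by
        rw [hp1, hq1]; ring
      have i1 : |2*s*c - h| ≤ 3*h^3/16 := by
        have d : 2*s*c - h = 2*s*(c - 1) + (2*s - h) := by ring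
        have t1 : |2*s*(c-1)| ≤ h^3/8 := by
          rw [abs_of_nonpos (by
            linarith [mul_nonneg hs0 (show (0:ℝ) ≤ 1 - c by linarith)] : 2*s*(c-1) ≤ 0)]
          linarith [mul_le_mul hs_le hc_lb (by linarith) (by linarith)]
        calc |2*s*c - h| = |2*s*(c-1) + (2*s - h)| := by rw [d]
          _ ≤ |2*s*(c-1)| + |2*s - h| := abs_add_le _ _
          _ ≤ h^3/8 + h^3/16 := add_le_add t1 h2s
          _ = 3*h^3/16 := by ring
      have i3 : |(-(2*s^3) - h*(c - 1))| ≤ 3*h^3/8 := by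
        rw [abs_le]; constructor
        · linarith [pow_le_pow_left₀ hs0 hs_le 3,
            mul_nonneg hp.le (by linarith : (0:ℝ) ≤ 1 - c), pow_nonneg hs0 3]
        · linarith [mul_le_mul_of_nonneg_left hc_lb hp.le, pow_nonneg hs0 3]
      have hsabs : |s| ≤ h/2 := by rw [abs_of_nonneg hs0]; exact hs_le
      calc |2*s^2*p1 - h*(q1 - a)|
          = |b*(s*(2*s*c - h)) + a*(-(2*s^3) - h*(c - 1))| := by rw [e2]
        _ ≤ |b| *(|s| * |2*s*c - h|) + |a| * |(-(2*s^3) - h*(c - 1))| := by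
            refine (abs_add_le _ _).trans ?_
            simp only [abs_mul]
            exact le_rfl
        _ ≤ N*((h/2)*(3*h^3/16)) + N*(3*h^3/8) := by
            have v1 : |s| * |2*s*c - h| ≤ (h/2)*(3*h^3/16) :=
              mul_le_mul hsabs i1 (abs_nonneg _) (by linarith)
            have v2 : |b| *(|s| * |2*s*c - h|) ≤ N*((h/2)*(3*h^3/16)) :=
              mul_le_mul hbN v1 (mul_nonneg (abs_nonneg _) (abs_nonneg _)) hN0
            have v3 : |a| * |(-(2*s^3) - h*(c - 1))| ≤ N*(3*h^3/8) :=
              mul_le_mul haN i3 (abs_nonneg _) hN0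
            linarith
        _ ≤ N*h^3 := by
            have w : N*h^4 ≤ N*h^3 := mul_le_mul_of_nonneg_left h43 hN0
            clear_value N; linarith only [w, mul_nonneg hN0 h3nn]
    calc |c3*((m - a)^2/2 - h*p1*(q1 - a))|
        = |c3| * (|p1| * |2*s^2*p1 - h*(q1 - a)|) := by rw [e, abs_mul, abs_mul]
      _ ≤ M * (N * (N*h^3)) := by
          apply mul_le_mul hc3b _ (mul_nonneg (abs_nonneg _) (abs_nonneg _)) hMpos.le
          exact mul_le_mul hp1N hA2 (abs_nonneg _) hN0
      _ = M*N^2*h^3 := by ring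
  have b3 : |c2^2*(h^2/2 - h*s)| ≤ M^2/32*h^3 := by
    have hA3 : |h^2/2 - h*s| ≤ h^3/32 := by
      rw [abs_of_nonneg (by
        linarith [mul_le_mul_of_nonneg_left hs_le hp.le] : (0:ℝ) ≤ h^2/2 - h*s)]
      linarith [mul_le_mul_of_nonneg_left (by linarith [hs_lb] : h/2 - s ≤ h^3/32) hp.le, h43]
    calc |c2^2*(h^2/2 - h*s)| = |c2|^2 * |h^2/2 - h*s| := by rw [abs_mul, abs_pow]
      _ ≤ M^2 * (h^3/32) := by
          apply mul_le_mul _ hA3 (abs_nonneg _) (sq_nonneg M)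
          exact pow_le_pow_left₀ (abs_nonneg c2) hc2b 2
      _ = M^2/32*h^3 := by ring
  have b4 : |V q2 - V m - W m * (q2 - m)| ≤ M^3/4*h^3 := by
    refine hE1.trans ?_
    have t := mul_le_mul hδ hδ (abs_nonneg _)
      (by linarith [mul_nonneg hMpos.le (sq_nonneg h)] : (0:ℝ) ≤ M*h^2/2)
    have u1 : M * (|q2 - m| * |q2 - m|) ≤ M * ((M*h^2/2) * (M*h^2/2)) :=
      mul_le_mul_of_nonneg_left t hMpos.le
    have u2 : M * ((M*h^2/2) * (M*h^2/2)) = M^3/4 * h^4 := by ring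
    have u3 : M^3/4 * h^4 ≤ M^3/4 * h^3 :=
      mul_le_mul_of_nonneg_left h43 (by positivity)
    linarith [u1, u2.le, u3]
  have b5 : |(W m - c2)*(q2 - m)| ≤ M^2*N/2*h^3 := by
    calc |(W m - c2)*(q2 - m)| = |W m - c2| * |q2 - m| := abs_mul _ _
      _ ≤ (M*(N*h)) * (M*h^2/2) := by
          exact mul_le_mul lip2 hδ (abs_nonneg _)
            (mul_nonneg hMpos.le (mul_nonneg hN0 hp.le))
      _ = M^2*N/2*h^3 := by ring
  have b6 : |V m - V a - c2*(m - a) - c3/2*(m - a)^2| ≤ M*N^3*h^3 := by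
    refine hρ2.trans ?_
    have nn : (0:ℝ) ≤ N*h := mul_nonneg hN0 hp.le
    have u := mul_le_mul (mul_le_mul hD2b hD2b (abs_nonneg _) nn) hD2b (abs_nonneg _)
      (mul_nonneg nn nn)
    have u1 : M * (|m - a| * |m - a| * |m - a|) ≤ M * ((N*h) * (N*h) * (N*h)) :=
      mul_le_mul_of_nonneg_left u hMpos.le
    linarith [u1]
  have b7 : |(-(h*p1))*(W q1 - c2 - c3*(q1 - a))| ≤ M*N^3*h^3 := by
    have nn : (0:ℝ) ≤ N*h := mul_nonneg hN0 hp.le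
    have u : (M* |q1 - a|)* |q1 - a| ≤ (M*(N*h))*(N*h) := by
      have w := mul_le_mul hD1b hD1b (abs_nonneg _) nn
      have w1 : M * (|q1 - a| * |q1 - a|) ≤ M * ((N*h) * (N*h)) :=
        mul_le_mul_of_nonneg_left w hMpos.le
      linarith [w1]
    calc |(-(h*p1))*(W q1 - c2 - c3*(q1 - a))|
        = |h| * |p1| * |W q1 - c2 - c3*(q1 - a)| := by rw [abs_mul, abs_neg, abs_mul]
      _ ≤ (h*N) * ((M*(N*h))*(N*h)) := by
          apply mul_le_mul _ (hρw.trans u) (abs_nonneg _)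
            (mul_nonneg hp.le hN0)
          rw [abs_of_pos hp]
          exact mul_le_mul_of_nonneg_left hp1N hp.le
      _ = M*N^3*h^3 := by ring
  have b8 : |h^2/2*((W q1)^2 - c2^2)| ≤ M^2*N*h^3 := by
    have e : (W q1)^2 - c2^2 = (W q1 - c2)*(W q1 + c2) := by ring
    have lplus : |W q1 + c2| ≤ 2*M := by
      calc |W q1 + c2| ≤ |W q1| + |c2| := abs_add_le _ _
        _ ≤ 2*M := by linarith
    calc |h^2/2*((W q1)^2 - c2^2)|
        = |h^2/2| * (|W q1 - c2| * |W q1 + c2|) := by rw [e, abs_mul, abs_mul]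
      _ ≤ (h^2/2) * ((M*(N*h)) * (2*M)) := by
          rw [abs_of_nonneg (by positivity : (0:ℝ) ≤ h^2/2)]
          apply mul_le_mul_of_nonneg_left _ (by positivity)
          exact mul_le_mul lip1 lplus (abs_nonneg _)
            (mul_nonneg hMpos.le (mul_nonneg hN0 hp.le))
      _ = M^2*N*h^3 := by ring
  have b9 : |(-(h*s))*c2*(W q1 - c2)| ≤ M^2*N/2*h^3 := by
    have e1 : |(-(h*s))*c2| = h*s* |c2| := by
      rw [abs_mul, abs_neg, abs_mul, abs_of_pos hp, abs_of_nonneg hs0]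
    calc |(-(h*s))*c2*(W q1 - c2)| = |(-(h*s))*c2| * |W q1 - c2| := abs_mul _ _
      _ = h*s* |c2| * |W q1 - c2| := by rw [e1]
      _ ≤ (h*(h/2)*M) * (M*(N*h)) := by
          apply mul_le_mul _ lip1 (abs_nonneg _)
            (mul_nonneg (mul_nonneg hp.le (by linarith)) hMpos.le)
          have v1 : h*s ≤ h*(h/2) := mul_le_mul_of_nonneg_left hs_le hp.le
          have v2 : h*s* |c2| ≤ h*(h/2)* |c2| := mul_le_mul_of_nonneg_right v1 (abs_nonneg c2)
          have v3 : h*(h/2)* |c2| ≤ h*(h/2)*M :=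
            mul_le_mul_of_nonneg_left hc2b (by linarith [mul_nonneg hp.le hp.le])
          linarith
      _ = M^2*N/2*h^3 := by ring
  refine le_trans (abs_add9 _ _ _ _ _ _ _ _ _) ?_
  have hsum : M*N/16*h^3 + M*N^2*h^3 + M^2/32*h^3 + M^3/4*h^3 + M^2*N/2*h^3
      + M*N^3*h^3 + M*N^3*h^3 + M^2*N*h^3 + M^2*N/2*h^3 ≤ C*h^3 := by
    have hpos : (0:ℝ) < h^3 := by positivity
    have e : C*h^3 = M*N/16*h^3 + M*N^2*h^3 + M^2/32*h^3 + M^3/4*h^3 + M^2*N/2*h^3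
        + M*N^3*h^3 + M*N^3*h^3 + M^2*N*h^3 + M^2*N/2*h^3 + h^3 := by rw [hC]; ring
    linarith [e.ge, e.le]
  clear_value c3 c2 q2 m p1 q1 s c W b a C M R N
  linarith only [b1, b2, b3, b4, b5, b6, b7, b8, b9, hsum]
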